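/- For nonnegative integers m and n, (-1)^m * sum_{k=0}^{m} binomial(m,k) * E_{n+k} / 2^{n+k} = (-1)^n * sum_{j=0}^{n} binomial(n,j) * E_{m+j}(-1/2), where E_j are the Euler numbers and E_r(x) are the Euler polynomials. -/

import Mathlib

open Finset

/-- The Euler polynomials `E n`, defined by the recurrence
`E n = X^n - (1/2) * ∑_{k<n} (n choose k) E k`, equivalent to the
generating function `2 e^{xt}/(e^t+1) = ∑ E_n(x) t^n/n!`. -/
noncomputable def eulerPoly : ℕ → Polynomial ℚ
  | n => Polynomial.X ^ n - Polynomial.C (1/2 : ℚ) *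
      ∑ k : Fin n, Polynomial.C ((n.choose k : ℚ)) * eulerPoly k

/-- The Euler numbers, `E n = 2^n * E_n(1/2)`. -/
noncomputable def eulerNumber (n : ℕ) : ℚ := 2 ^ n * (eulerPoly n).eval (1/2 : ℚ)


open Polynomial in
lemma eulerPoly_def (n : ℕ) : eulerPoly n =
    X ^ n - C (1/2 : ℚ) * ∑ k ∈ range n, C ((n.choose k : ℚ)) * eulerPoly k := by
  rw [eulerPoly]
  rw [Fin.sum_univ_eq_sum_range (fun k => Polynomial.C ((n.choose k : ℚ)) * eulerPoly k) n]

open Polynomial in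
lemma eulerPoly_natDegree_le (n : ℕ) : (eulerPoly n).natDegree ≤ n := by
  induction n using Nat.strong_induction_on with
  | _ n ih =>
    rw [eulerPoly_def]
    refine le_trans (natDegree_sub_le _ _) ?_
    simp only [natDegree_X_pow, max_le_iff, le_refl, true_and]
    refine le_trans (natDegree_mul_le) ?_
    refine le_trans (add_le_add le_rfl (natDegree_sum_le _ _)) ?_
    rw [natDegree_C, zero_add]
    rw [Finset.fold_max_le]
    constructor
    · exact Nat.zero_le _
    · intro k hk
      refine le_trans natDegree_mul_le ?_
      rw [natDegree_C, zero_add]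
      exact le_trans (ih k (mem_range.mp hk)) (le_of_lt (mem_range.mp hk))

open Polynomial in
lemma eulerPoly_zero : eulerPoly 0 = 1 := by
  rw [eulerPoly_def]; simp

open Polynomial in
lemma eulerPoly_derivative (n : ℕ) :
    derivative (eulerPoly (n + 1)) = C ((n : ℚ) + 1) * eulerPoly n := by
  induction n using Nat.strong_induction_on with
  | _ n ih =>
    rw [eulerPoly_def (n+1), eulerPoly_def n]
    rw [derivative_sub, derivative_X_pow, derivative_C_mul, derivative_sum]
    have h1 : ∀ k ∈ range (n+1), derivative (C (((n+1).choose k : ℚ)) * eulerPoly k)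
        = C (((n+1).choose k : ℚ)) * derivative (eulerPoly k) := by
      intro k _; rw [derivative_C_mul]
    rw [Finset.sum_congr rfl h1, Finset.sum_range_succ']
    simp only [Nat.choose_zero_right, Nat.cast_one, eulerPoly_zero, map_one, derivative_one,
      mul_zero, add_zero]
    have h2 : ∀ k ∈ range n, C (((n+1).choose (k+1) : ℚ)) * derivative (eulerPoly (k+1))
        = C ((n:ℚ)+1) * (C ((n.choose k : ℚ)) * eulerPoly k) := by
      intro k hk
      rw [ih k (mem_range.mp hk)]
      rw [← mul_assoc, ← mul_assoc, ← map_mul, ← map_mul]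
      congr 2
      have := Nat.add_one_mul_choose_eq n k
      have hc : (((n+1).choose (k+1) : ℚ)) * ((k:ℚ)+1) = ((n:ℚ)+1) * (n.choose k : ℚ) := by
        exact_mod_cast this.symm
      linarith [hc]
    rw [Finset.sum_congr rfl h2, ← Finset.mul_sum]
    push_cast
    ring

open Polynomial in
lemma eulerPoly_iterate_derivative (n k : ℕ) (h : k ≤ n) :
    derivative^[k] (eulerPoly n) = C ((n.descFactorial k : ℚ)) * eulerPoly (n - k) := by
  induction k with
  | zero => simp
  | succ k ih =>
    rw [Function.iterate_succ_apply', ih (le_of_lt (Nat.lt_of_succ_le h)),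
      derivative_C_mul]
    have hnk : n - k = (n - (k+1)) + 1 := by omega
    rw [hnk, eulerPoly_derivative]
    rw [← mul_assoc, ← map_mul]
    congr 2
    rw [Nat.descFactorial_succ]
    have : ((n - (k+1) : ℕ) : ℚ) + 1 = ((n - k : ℕ) : ℚ) := by
      push_cast [Nat.cast_sub (le_of_lt (Nat.lt_of_succ_le h)), Nat.cast_sub h]
      ring
    rw [this]
    push_cast [Nat.cast_sub (le_of_lt (Nat.lt_of_succ_le h))]
    ring

open Polynomial in
lemma eulerPoly_hasseDeriv (n k : ℕ) (h : k ≤ n) :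
    hasseDeriv k (eulerPoly n) = C ((n.choose k : ℚ)) * eulerPoly (n - k) := by
  have h1 : (Nat.factorial k : ℚ) • hasseDeriv k (eulerPoly n) = derivative^[k] (eulerPoly n) := by
    have h := congrFun (@Polynomial.factorial_smul_hasseDeriv ℚ _ k) (eulerPoly n)
    simpa [Nat.cast_smul_eq_nsmul] using h
  rw [eulerPoly_iterate_derivative n k h] at h1
  have hk : (Nat.factorial k : ℚ) ≠ 0 := by exact_mod_cast Nat.factorial_ne_zero k
  have h2 : ((n.descFactorial k : ℚ)) = (Nat.factorial k : ℚ) * (n.choose k : ℚ) := by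
    exact_mod_cast congrArg (Nat.cast (R := ℚ)) (Nat.descFactorial_eq_factorial_mul_choose n k)
  apply smul_right_injective (Polynomial ℚ) hk
  show (Nat.factorial k : ℚ) • hasseDeriv k (eulerPoly n) = (Nat.factorial k : ℚ) • (C ((n.choose k : ℚ)) * eulerPoly (n - k))
  rw [h1, smul_eq_C_mul, ← mul_assoc, ← map_mul, h2]

open Polynomial in
lemma eulerPoly_add_eval (n : ℕ) (x y : ℚ) :
    (eulerPoly n).eval (x + y) = ∑ k ∈ range (n + 1),
      (n.choose k : ℚ) * (eulerPoly (n - k)).eval x * y ^ k := by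
  have h0 : (eulerPoly n).eval (x + y) = (taylor x (eulerPoly n)).eval y := by
    rw [taylor_eval, add_comm]
  rw [h0, eval_eq_sum_range' (lt_of_le_of_lt (by
      rw [natDegree_taylor]; exact eulerPoly_natDegree_le n) (Nat.lt_succ_self n))]
  refine Finset.sum_congr rfl ?_
  intro k hk
  rw [taylor_coeff, eulerPoly_hasseDeriv n k (Nat.lt_succ_iff.mp (mem_range.mp hk))]
  simp [mul_comm]

noncomputable def eE (n : ℕ) : ℚ := (eulerPoly n).eval (1/2 : ℚ)
noncomputable def fE (n : ℕ) : ℚ := (eulerPoly n).eval (-(1/2) : ℚ)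

open Polynomial in
lemma eulerPoly_add_one_eval (n : ℕ) (x : ℚ) :
    (eulerPoly n).eval (x + 1) = ∑ j ∈ range (n + 1), (n.choose j : ℚ) * (eulerPoly j).eval x := by
  rw [eulerPoly_add_eval]
  rw [← Finset.sum_range_reflect (fun j => (n.choose j : ℚ) * (eulerPoly j).eval x) (n+1)]
  refine Finset.sum_congr rfl ?_
  intro k hk
  have hkn : k ≤ n := Nat.lt_succ_iff.mp (mem_range.mp hk)
  simp only [Nat.add_sub_cancel]
  rw [Nat.choose_symm hkn]
  simp

open Polynomial in
lemma eulerPoly_sub_one_eval (n : ℕ) (x : ℚ) :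
    (eulerPoly n).eval (x - 1) = ∑ j ∈ range (n + 1),
      (n.choose j : ℚ) * (eulerPoly j).eval x * (-1 : ℚ) ^ (n - j) := by
  have := eulerPoly_add_eval n x (-1)
  rw [show x + (-1 : ℚ) = x - 1 by ring] at this
  rw [this, ← Finset.sum_range_reflect
    (fun j => (n.choose j : ℚ) * (eulerPoly j).eval x * (-1 : ℚ) ^ (n - j)) (n+1)]
  refine Finset.sum_congr rfl ?_
  intro k hk
  have hkn : k ≤ n := Nat.lt_succ_iff.mp (mem_range.mp hk)
  simp only [Nat.add_sub_cancel]
  rw [Nat.choose_symm hkn]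
  simp [Nat.sub_sub_self hkn]

open Polynomial in
lemma eulerPoly_eval_rec (n : ℕ) (x : ℚ) :
    ∑ k ∈ range n, (n.choose k : ℚ) * (eulerPoly k).eval x
      + 2 * (eulerPoly n).eval x = 2 * x ^ n := by
  have h := congrArg (Polynomial.eval x) (eulerPoly_def n)
  simp only [eval_sub, eval_pow, eval_X, eval_mul, eval_C, eval_finset_sum] at h
  rw [h]; ring

lemma fE_sum (n : ℕ) : ∑ j ∈ range (n + 1), (n.choose j : ℚ) * fE j = eE n := by
  have := eulerPoly_add_one_eval n (-(1/2))
  rw [show (-(1/2) : ℚ) + 1 = 1/2 by ring] at this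
  exact this.symm

lemma fE_alt (n : ℕ) : fE n = ∑ j ∈ range (n + 1), (n.choose j : ℚ) * eE j * (-1 : ℚ) ^ (n - j) := by
  have := eulerPoly_sub_one_eval n (1/2)
  rw [show (1/2 : ℚ) - 1 = -(1/2) by ring] at this
  exact this

lemma eE_odd (n : ℕ) (hn : Odd n) : eE n = 0 := by
  induction n using Nat.strong_induction_on with
  | _ n ih =>
    have hR2 : ∑ k ∈ range n, (n.choose k : ℚ) * eE k = 2 * (1/2 : ℚ) ^ n - 2 * eE n := by
      simp only [eE]; have := eulerPoly_eval_rec n (1/2); linarith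
    have hR3 : ∑ k ∈ range n, (n.choose k : ℚ) * fE k = 2 * (-(1/2) : ℚ) ^ n - 2 * fE n := by
      simp only [fE]; have := eulerPoly_eval_rec n (-(1/2)); linarith
    have hR1 : ∑ k ∈ range n, (n.choose k : ℚ) * fE k = eE n - fE n := by
      have := fE_sum n
      rw [Finset.sum_range_succ] at this
      simp only [Nat.choose_self, Nat.cast_one, one_mul] at this
      linarith
    have hsum : eE n + fE n = 2 * (-(1/2) : ℚ) ^ n := by rw [hR1] at hR3; linarith
    have hneg : ((-(1/2) : ℚ)) ^ n = -((1/2 : ℚ) ^ n) := by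
      rw [neg_pow, hn.neg_one_pow]; ring
    -- fE n = 3 eE n - 2 (1/2)^n
    have hf : fE n = 3 * eE n - 2 * (1/2 : ℚ) ^ n := by
      have h4 := fE_alt n
      rw [Finset.sum_range_succ] at h4
      simp only [Nat.choose_self, Nat.cast_one, one_mul, Nat.sub_self, pow_zero, mul_one] at h4
      have hterm : ∀ j ∈ range n, (n.choose j : ℚ) * eE j * (-1 : ℚ) ^ (n - j)
          = -((n.choose j : ℚ) * eE j) := by
        intro j hj
        rcases Nat.even_or_odd j with hje | hjo
        · have : Odd (n - j) := Nat.Odd.sub_even (le_of_lt (mem_range.mp hj)) hn hje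
          rw [this.neg_one_pow]; ring
        · rw [ih j (mem_range.mp hj) hjo]; ring
      rw [Finset.sum_congr rfl hterm, Finset.sum_neg_distrib] at h4
      rw [hR2] at h4
      linarith
    rw [hneg] at hsum
    linarith

lemma binom_shift (a : ℕ → ℚ) (m n : ℕ) :
    ∑ k ∈ range (m + 2), ((m+1).choose k : ℚ) * a (n + k)
      = ∑ k ∈ range (m + 1), (m.choose k : ℚ) * a (n + k)
        + ∑ k ∈ range (m + 1), (m.choose k : ℚ) * a (n + 1 + k) := by
  rw [Finset.sum_range_succ']
  simp only [Nat.choose_zero_right, Nat.cast_one, one_mul, Nat.add_zero]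
  have h1 : ∀ k ∈ range (m + 1), ((m+1).choose (k+1) : ℚ) * a (n + (k+1))
      = (m.choose k : ℚ) * a (n + 1 + k) + (m.choose (k+1) : ℚ) * a (n + (k+1)) := by
    intro k _
    rw [Nat.choose_succ_succ]
    push_cast
    rw [show n + (k+1) = n + 1 + k by omega]
    ring
  rw [Finset.sum_congr rfl h1, Finset.sum_add_distrib]
  have h2 : ∑ k ∈ range (m + 1), (m.choose (k+1) : ℚ) * a (n + (k+1)) + a n
      = ∑ k ∈ range (m + 1), (m.choose k : ℚ) * a (n + k) := by
    rw [Finset.sum_range_succ, Nat.choose_succ_self, Finset.sum_range_succ' (fun k => (m.choose k : ℚ) * a (n + k)) m]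
    simp
  linarith [h2]

noncomputable def TA (m n : ℕ) : ℚ := ∑ k ∈ range (m + 1), (m.choose k : ℚ) * eE (n + k)
noncomputable def TB (m n : ℕ) : ℚ := ∑ j ∈ range (n + 1), (n.choose j : ℚ) * fE (m + j)

lemma TA_succ (m n : ℕ) : TA (m+1) n = TA m n + TA m (n+1) := by
  simpa [TA] using binom_shift eE m n

lemma TB_succ (m n : ℕ) : TB m (n+1) = TB m n + TB (m+1) n := by
  simpa [TB] using binom_shift fE n m

lemma key (m : ℕ) : ∀ n, (-1 : ℚ) ^ m * TA m n = (-1 : ℚ) ^ n * TB m n := by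
  induction m with
  | zero =>
    intro n
    have hTA : TA 0 n = eE n := by simp [TA]
    have hTB : TB 0 n = eE n := by
      rw [TB, ← fE_sum n]
      refine Finset.sum_congr rfl ?_
      intro j _
      rw [Nat.zero_add]
    rw [hTA, hTB, pow_zero, one_mul]
    rcases Nat.even_or_odd n with he | ho
    · rw [he.neg_one_pow, one_mul]
    · rw [eE_odd n ho, mul_zero]
  | succ m ih =>
    intro n
    have h1 := ih n
    have h2 := ih (n+1)
    have hA := TA_succ m n
    have hB := TB_succ m n
    rw [pow_succ] at *
    rw [hA]
    have : TB (m+1) n = TB m (n+1) - TB m n := by linarith [hB]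
    rw [this]
    nlinarith [h1, h2]

theorem wu_sun_pan_euler (m n : ℕ) :
    (-1 : ℚ) ^ m * ∑ k ∈ range (m + 1), (m.choose k : ℚ) * eulerNumber (n + k) / 2 ^ (n + k) =
    (-1 : ℚ) ^ n * ∑ j ∈ range (n + 1),
        (n.choose j : ℚ) * (eulerPoly (m + j)).eval (-(1/2) : ℚ) := by
  have hL : ∑ k ∈ range (m + 1), (m.choose k : ℚ) * eulerNumber (n + k) / 2 ^ (n + k)
      = TA m n := by
    refine Finset.sum_congr rfl ?_
    intro k _
    rw [eulerNumber]
    have h2 : (2 : ℚ) ^ (n + k) ≠ 0 := by positivity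
    field_simp [eE]
    rfl
  rw [hL, key m n]
  rfl
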